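/- Let f: [0,∞) → [0,∞] be upper semi-continuous with f(0) = 0 and f(y) > 0 for y > 0, and suppose ∫₀⁺ dy/f(y) = ∞. Let φ: [r₁, r₀] → [0,∞) be absolutely continuous with φ(t) ≥ 0, φ(t) = 0 for t in a neighborhood of r₀ within [r₁,r₀], φ(s₁) > 0 for some s₁ ∈ (r₁, r₀), and φ'(t) + f(φ(t)) ≥ 0 almost everywhere. Then no such φ exists; i.e., these conditions are contradictory. -/

import Mathlib

open MeasureTheory
open scoped ENNReal
open Set
open scoped NNReal



lemma stieltjes_measure_eq_outer (F : StieltjesFunction ℝ) (s : Set ℝ) :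
    F.measure s = F.outer s := by
  rw [StieltjesFunction.measure_def]
  rfl

lemma stieltjes_image_null (F : StieltjesFunction ℝ) (hF : F.measure ≪ volume)
    {S : Set ℝ} (hS : volume S = 0) : volume (F '' S) = 0 := by
  set M := toMeasurable volume S with hM
  have hSM : S ⊆ M := subset_toMeasurable _ _
  have hM0 : F.measure M = 0 := hF (by rw [hM, measure_toMeasurable]; exact hS)
  have houter : F.outer M = 0 := by rw [← stieltjes_measure_eq_outer]; exact hM0
  have key : ∀ ε : ℝ≥0, 0 < ε → volume (F '' S) ≤ 2 * ε := by
    intro ε hε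
    have hεE : (0 : ℝ≥0∞) < ε := ENNReal.coe_pos.2 hε
    -- extract a cover from the outer measure
    have h1 : F.outer M < ε := by rw [houter]; exact hεE
    rw [StieltjesFunction.outer, OuterMeasure.ofFunction_apply] at h1
    obtain ⟨t, ht⟩ := iInf_lt_iff.mp h1
    obtain ⟨hcov, hsum⟩ := iInf_lt_iff.mp ht
    -- for each i, choose an interval
    have hchoice : ∀ i : ℕ, ∃ a b : ℝ, t i ⊆ Ioc a b ∧
        ENNReal.ofReal (F b - F a) ≤ F.length (t i) + ε * 2⁻¹ ^ (i + 1) := by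
      intro i
      have hfin : F.length (t i) ≠ ∞ := by
        refine ne_top_of_le_ne_top (hsum.trans ENNReal.coe_lt_top).ne ?_
        exact ENNReal.le_tsum i
      have h2 : F.length (t i) < F.length (t i) + ε * 2⁻¹ ^ (i + 1) := by
        refine ENNReal.lt_add_right hfin ?_
        have : (ε : ℝ≥0∞) ≠ 0 := by exact_mod_cast hε.ne'
        have h2i : ((2:ℝ≥0∞)⁻¹) ^ (i+1) ≠ 0 := by
          apply pow_ne_zero
          simp
        exact mul_ne_zero this h2i
      rw [StieltjesFunction.length_eq] at h2
      obtain ⟨a, ha⟩ := iInf_lt_iff.mp h2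
      obtain ⟨b, hb⟩ := iInf_lt_iff.mp ha
      obtain ⟨hsub, hlen⟩ := iInf_lt_iff.mp hb
      exact ⟨a, b, fun x hx => hsub ⟨hx, not_isBot x⟩, hlen.le.trans_eq (by rw [StieltjesFunction.length_eq])⟩
    choose a b hab hlen using hchoice
    have himg : F '' S ⊆ ⋃ i, Icc (F (a i)) (F (b i)) := by
      rintro _ ⟨x, hx, rfl⟩
      obtain ⟨i, hi⟩ := mem_iUnion.mp (hcov (hSM hx))
      have := hab i hi
      exact mem_iUnion.mpr ⟨i, ⟨F.mono this.1.le, F.mono this.2⟩⟩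
    calc volume (F '' S) ≤ ∑' i, volume (Icc (F (a i)) (F (b i))) :=
          (measure_mono himg).trans (measure_iUnion_le _)
      _ = ∑' i, ENNReal.ofReal (F (b i) - F (a i)) := by simp [Real.volume_Icc]
      _ ≤ ∑' i, (F.length (t i) + ε * 2⁻¹ ^ (i + 1)) := ENNReal.tsum_le_tsum hlen
      _ = (∑' i, F.length (t i)) + ∑' i : ℕ, (ε : ℝ≥0∞) * 2⁻¹ ^ (i + 1) := ENNReal.tsum_add
      _ ≤ ε + ε := by
          refine add_le_add hsum.le ?_
          rw [ENNReal.tsum_mul_left]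
          refine mul_le_of_le_one_right zero_le ?_
          calc ∑' i : ℕ, (2 : ℝ≥0∞)⁻¹ ^ (i + 1) = ∑' i : ℕ, 2⁻¹ ^ i * 2⁻¹ := by
                simp [pow_succ]
            _ ≤ 1 := by
                rw [ENNReal.tsum_mul_right, ENNReal.tsum_geometric]
                rw [show (1:ℝ≥0∞) - 2⁻¹ = 2⁻¹ from ENNReal.one_sub_inv_two]
                rw [inv_inv]
                exact (ENNReal.mul_inv_cancel (by simp) (by simp)).le
      _ = 2 * ε := by ring
  refine le_antisymm ?_ zero_le
  refine ENNReal.le_of_forall_pos_le_add fun ε hε _ => ?_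
  calc volume (F '' S) ≤ 2 * (ε / 2 : ℝ≥0) := key (ε / 2) (by positivity)
    _ ≤ 0 + ε := by
        rw [zero_add]
        rw [show ((ε/2 : ℝ≥0):ℝ≥0∞) = (ε:ℝ≥0∞)/2 by
          rw [ENNReal.coe_div (by norm_num)]; norm_num]
        rw [ENNReal.mul_div_cancel' (by norm_num) (by norm_num)]


lemma factor_image_null {ψ Ψ : ℝ → ℝ} {S : Set ℝ}
    (hmod : ∀ x y : ℝ, x ≤ y → |ψ y - ψ x| ≤ Ψ y - Ψ x)
    (hnull : volume (Ψ '' S) = 0) :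
    volume (ψ '' S) = 0 := by
  have habs : ∀ x y : ℝ, |ψ y - ψ x| ≤ |Ψ y - Ψ x| := by
    intro x y
    rcases le_total x y with h | h
    · exact (hmod x y h).trans (le_abs_self _)
    · rw [abs_sub_comm (ψ y), abs_sub_comm (Ψ y)]
      exact (hmod y x h).trans (le_abs_self _)
  set u : ℝ → ℝ := fun z => ψ (Function.invFun Ψ z) with hu
  have hval : ∀ x : ℝ, u (Ψ x) = ψ x := by
    intro x
    have h1 : Ψ (Function.invFun Ψ (Ψ x)) = Ψ x := Function.invFun_eq ⟨x, rfl⟩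
    have := habs (Function.invFun Ψ (Ψ x)) x
    rw [h1, sub_self, abs_zero] at this
    have : ψ x - ψ (Function.invFun Ψ (Ψ x)) = 0 :=
      le_antisymm (le_trans (le_abs_self _) this) (by
        have h2 := abs_nonneg (ψ x - ψ (Function.invFun Ψ (Ψ x)))
        nlinarith [abs_le.mp (this)])
    simp only [hu]
    linarith [this]
  have hlip : LipschitzOnWith 1 u (Ψ '' S) := by
    rw [lipschitzOnWith_iff_dist_le_mul]
    rintro _ ⟨x, hx, rfl⟩ _ ⟨y, hy, rfl⟩
    rw [hval x, hval y, NNReal.coe_one, one_mul]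
    rw [Real.dist_eq, Real.dist_eq]
    exact habs y x
  have himg : u '' (Ψ '' S) = ψ '' S := by
    ext z
    constructor
    · rintro ⟨_, ⟨x, hx, rfl⟩, rfl⟩
      exact ⟨x, hx, (hval x).symm⟩
    · rintro ⟨x, hx, rfl⟩
      exact ⟨Ψ x, ⟨x, hx, rfl⟩, hval x⟩
  have h1 : (volume : Measure ℝ) = μH[1] := MeasureTheory.hausdorffMeasure_real.symm
  rw [← himg, h1]
  refine le_antisymm ?_ zero_le
  calc μH[1] (u '' (Ψ '' S)) ≤ (1:ℝ≥0) ^ (1:ℝ) * μH[1] (Ψ '' S) :=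
        hlip.hausdorffMeasure_image_le zero_le_one
    _ = 0 := by rw [← h1, hnull]; simp


lemma image_null_of_primitive {g : ℝ → ℝ} {r₁ r₀ : ℝ} (hr : r₁ ≤ r₀)
    (hg : IntervalIntegrable g volume r₁ r₀) {ψ : ℝ → ℝ}
    (hψ : ∀ x y : ℝ, x ≤ y →
      |ψ y - ψ x| ≤ ∫ s in (max r₁ (min x r₀))..(max r₁ (min y r₀)), |g s|)
    {S : Set ℝ} (hS : volume S = 0) : volume (ψ '' S) = 0 := by
  set cl : ℝ → ℝ := fun t => max r₁ (min t r₀) with hcl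
  have hcl_mem : ∀ t, cl t ∈ Icc r₁ r₀ := fun t =>
    ⟨le_max_left _ _, max_le hr (min_le_right _ _)⟩
  have hclmono : Monotone cl := fun x y hxy =>
    max_le_max le_rfl (min_le_min hxy le_rfl)
  have hmemu : ∀ t, cl t ∈ uIcc r₁ r₀ := fun t => by
    rw [uIcc_of_le hr]; exact hcl_mem t
  have hgsub : ∀ x y : ℝ, IntervalIntegrable (fun s => |g s|) volume x y →
      True := fun _ _ _ => trivial
  have hsub : ∀ x y : ℝ, IntervalIntegrable (fun s => |g s|) volume (cl x) (cl y) := by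
    intro x y
    exact hg.abs.mono_set (uIcc_subset_uIcc (hmemu x) (hmemu y))
  have hsub' : ∀ x : ℝ, IntervalIntegrable (fun s => |g s|) volume r₁ (cl x) := by
    intro x
    exact hg.abs.mono_set (uIcc_subset_uIcc left_mem_uIcc (hmemu x))
  set Ψ : ℝ → ℝ := fun t => ∫ s in r₁..(cl t), |g s| with hΨ
  have hΨsub : ∀ x y : ℝ, Ψ y - Ψ x = ∫ s in (cl x)..(cl y), |g s| := by
    intro x y
    exact intervalIntegral.integral_interval_sub_left (hsub' y) (hsub' x)
  have hΨmono : Monotone Ψ := by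
    intro x y hxy
    have h0 : (0:ℝ) ≤ ∫ s in (cl x)..(cl y), |g s| :=
      intervalIntegral.integral_nonneg (hclmono hxy) (fun s _ => abs_nonneg _)
    have := hΨsub x y
    linarith
  have hΨc : Continuous Ψ := by
    have hcont : ContinuousOn (fun b => ∫ s in r₁..b, |g s|) (uIcc r₁ r₀) :=
      intervalIntegral.continuousOn_primitive_interval' hg.abs left_mem_uIcc
    have hclc : Continuous cl := continuous_const.max (continuous_id.min continuous_const)
    exact hcont.comp_continuous hclc hmemu
  set ΨS : StieltjesFunction ℝ :=
    ⟨Ψ, hΨmono, fun x => (hΨc.continuousAt).continuousWithinAt⟩ with hΨS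
  set G : ℝ → ℝ≥0∞ := (Icc r₁ r₀).indicator (fun t => ENNReal.ofReal |g t|) with hG
  have hmeq : ΨS.measure = volume.withDensity G := by
    refine Measure.ext_of_Ioc _ _ (fun a b hab => ?_)
    rw [StieltjesFunction.measure_Ioc]
    have h1 : (volume.withDensity G) (Ioc a b) = ∫⁻ t in Ioc a b, G t := by
      rw [withDensity_apply _ measurableSet_Ioc]
    have h2 : ∫⁻ t in Ioc a b, G t = ∫⁻ t in Ioc a b ∩ Icc r₁ r₀, ENNReal.ofReal |g t| := by
      rw [hG, lintegral_indicator measurableSet_Icc,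
        Measure.restrict_restrict measurableSet_Icc, Set.inter_comm]
    have hae : (Ioc a b ∩ Icc r₁ r₀ : Set ℝ) =ᵐ[volume] Ioc (cl a) (cl b) := by
      have hnull : volume ({r₁, r₀} : Set ℝ) = 0 :=
        ((Set.countable_singleton r₀).insert r₁).measure_zero _
      rw [MeasureTheory.ae_eq_set]
      constructor
      · refine measure_mono_null (fun t ht => ?_) hnull
        obtain ⟨⟨⟨hta, htb⟩, htr₁, htr₀⟩, hnot⟩ := ht
        by_contra hmem
        simp only [mem_insert_iff, mem_singleton_iff, not_or] at hmem
        have h₁ : r₁ < t := lt_of_le_of_ne htr₁ (Ne.symm hmem.1)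
        have h₂ : t < r₀ := lt_of_le_of_ne htr₀ hmem.2
        exact hnot ⟨max_lt h₁ (lt_of_le_of_lt (min_le_left _ _) hta),
          le_max_of_le_right (le_min htb h₂.le)⟩
      · refine measure_mono_null (fun t ht => ?_) hnull
        exfalso
        obtain ⟨⟨hta, htb⟩, hnot⟩ := ht
        have h₁ : r₁ < t := lt_of_le_of_lt (le_max_left _ _) hta
        have h₀ : t ≤ r₀ := htb.trans (hcl_mem b).2
        have hmin : min a r₀ < t := lt_of_le_of_lt (le_max_right r₁ _) hta
        have h2 : a < t := by
          rcases le_total a r₀ with h | h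
          · rwa [min_eq_left h] at hmin
          · rw [min_eq_right h] at hmin; linarith
        have h3 : t ≤ b := by
          rcases le_total b r₀ with h | h
          · have hclb : cl b = max r₁ b := by
              simp only [hcl]
              rw [min_eq_left h]
            rw [hclb] at htb
            rcases le_total r₁ b with h' | h'
            · rwa [max_eq_right h'] at htb
            · rw [max_eq_left h'] at htb; linarith
          · linarith
        exact hnot ⟨⟨h2, h3⟩, h₁.le, h₀⟩
    rw [h1, h2, setLIntegral_congr hae]
    have hcc : cl a ≤ cl b := hclmono hab.le
    rw [hΨsub a b, intervalIntegral.integral_of_le hcc]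
    rw [MeasureTheory.ofReal_integral_eq_lintegral_ofReal]
    · exact ((intervalIntegrable_iff_integrableOn_Ioc_of_le hcc).mp (hsub a b))
    · exact Filter.Eventually.of_forall (fun s => abs_nonneg _)
  have hAC : ΨS.measure ≪ volume := by
    rw [hmeq]; exact withDensity_absolutelyContinuous volume G
  have hΨnull : volume (Ψ '' S) = 0 := stieltjes_image_null ΨS hAC hS
  refine factor_image_null (Ψ := Ψ) ?_ hΨnull
  intro x y hxy
  calc |ψ y - ψ x| ≤ ∫ s in (cl x)..(cl y), |g s| := hψ x y hxy
    _ = Ψ y - Ψ x := (hΨsub x y).symm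

/-- One-variable lemma behind the strong maximum principle: if `∫₀⁺ dy/f(y) = ∞`, there can be
no nonnegative absolutely continuous function `φ` on `[r₁, r₀]`, vanishing near `r₀` but not
identically zero, with `φ' + f(φ) ≥ 0` a.e. (Absolute continuity is encoded by the fundamental
theorem of calculus with an integrable density `g` which is a.e. the derivative of `φ`.) -/
theorem no_subharmonic_bump (f : ℝ → ℝ≥0∞)
    (husc : UpperSemicontinuousOn f (Set.Ici 0))
    (hf0 : f 0 = 0) (hfpos : ∀ y : ℝ, 0 < y → 0 < f y)
    (hint : ∀ ε : ℝ, 0 < ε → ∫⁻ y in Set.Ioo 0 ε, (f y)⁻¹ = ∞)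
    (r₁ r₀ : ℝ) (hr : r₁ < r₀) (φ g : ℝ → ℝ)
    (hg_int : IntervalIntegrable g volume r₁ r₀)
    (hftc : ∀ t ∈ Set.Icc r₁ r₀, φ t = φ r₁ + ∫ s in r₁..t, g s)
    (hg_deriv : ∀ᵐ t ∂volume, t ∈ Set.Ioo r₁ r₀ → HasDerivAt φ (g t) t)
    (hφnn : ∀ t ∈ Set.Icc r₁ r₀, 0 ≤ φ t)
    (hφ0 : ∃ δ : ℝ, 0 < δ ∧ ∀ t ∈ Set.Icc (r₀ - δ) r₀, φ t = 0)
    (hs₁ : ∃ s₁ ∈ Set.Ioo r₁ r₀, 0 < φ s₁)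
    (hsub : ∀ᵐ t ∂volume, t ∈ Set.Ioo r₁ r₀ → ENNReal.ofReal (-g t) ≤ f (φ t)) :
    False := by
  obtain ⟨s₁, hs₁mem, hs₁pos⟩ := hs₁
  obtain ⟨δ, hδpos, hδ0⟩ := hφ0
  set cl : ℝ → ℝ := fun t => max r₁ (min t r₀) with hcl
  have hcl_mem : ∀ t, cl t ∈ Icc r₁ r₀ := fun t =>
    ⟨le_max_left _ _, max_le hr.le (min_le_right _ _)⟩
  have hcl_id : ∀ t ∈ Icc r₁ r₀, cl t = t := by
    intro t ht
    simp only [hcl]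
    rw [min_eq_left ht.2, max_eq_right ht.1]
  have hmemu : ∀ t, cl t ∈ uIcc r₁ r₀ := fun t => by
    rw [uIcc_of_le hr.le]; exact hcl_mem t
  have hclmono : Monotone cl := fun x y hxy =>
    max_le_max le_rfl (min_le_min hxy le_rfl)
  have hgsub : ∀ x y : ℝ, IntervalIntegrable g volume (cl x) (cl y) := fun x y =>
    hg_int.mono_set (uIcc_subset_uIcc (hmemu x) (hmemu y))
  have hgsub' : ∀ x : ℝ, IntervalIntegrable g volume r₁ (cl x) := fun x =>
    hg_int.mono_set (uIcc_subset_uIcc left_mem_uIcc (hmemu x))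
  set ψ : ℝ → ℝ := fun t => φ r₁ + ∫ s in r₁..(cl t), g s with hψdef
  have hψsub : ∀ x y : ℝ, ψ y - ψ x = ∫ s in (cl x)..(cl y), g s := by
    intro x y
    have := intervalIntegral.integral_interval_sub_left (hgsub' y) (hgsub' x)
    simp only [hψdef]
    rw [← this]; ring
  have hψφ : ∀ t ∈ Icc r₁ r₀, ψ t = φ t := by
    intro t ht
    simp only [hψdef]
    rw [hcl_id t ht, ← hftc t ht]
  have hψc : Continuous ψ := by
    have hcont : ContinuousOn (fun b => ∫ s in r₁..b, g s) (uIcc r₁ r₀) :=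
      intervalIntegral.continuousOn_primitive_interval' hg_int left_mem_uIcc
    have hclc : Continuous cl := continuous_const.max (continuous_id.min continuous_const)
    exact continuous_const.add (hcont.comp_continuous hclc hmemu)
  -- the Lusin property for ψ
  have hψnull : ∀ S : Set ℝ, volume S = 0 → volume (ψ '' S) = 0 := by
    intro S hS
    refine image_null_of_primitive hr.le hg_int ?_ hS
    intro x y hxy
    rw [hψsub x y]
    exact intervalIntegral.abs_integral_le_integral_abs (hclmono hxy)
  -- basic positivity data
  have hr₁s₁ : r₁ < s₁ := hs₁mem.1
  have hs₁r₀ : s₁ < r₀ := hs₁mem.2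
  have hψs₁ : 0 < ψ s₁ := by
    rw [hψφ s₁ ⟨hr₁s₁.le, hs₁r₀.le⟩]; exact hs₁pos
  have hψr₀ : ψ r₀ = 0 := by
    rw [hψφ r₀ ⟨hr.le, le_refl r₀⟩]
    exact hδ0 r₀ ⟨by linarith, le_rfl⟩
  -- first zero of ψ after s₁
  set Z : Set ℝ := {t ∈ Icc s₁ r₀ | ψ t = 0} with hZ
  have hZne : Z.Nonempty := ⟨r₀, ⟨⟨hs₁r₀.le, le_rfl⟩, hψr₀⟩⟩
  have hZclosed : IsClosed Z := by
    have : Z = Icc s₁ r₀ ∩ ψ ⁻¹' {0} := by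
      ext t; simp [hZ, and_comm]
    rw [this]
    exact isClosed_Icc.inter (isClosed_singleton.preimage hψc)
  have hZbdd : BddBelow Z := ⟨s₁, fun t ht => ht.1.1⟩
  set s₂ : ℝ := sInf Z with hs₂def
  have hs₂mem : s₂ ∈ Z := hZclosed.csInf_mem hZne hZbdd
  have hψs₂ : ψ s₂ = 0 := hs₂mem.2
  have hs₁s₂ : s₁ < s₂ := by
    rcases lt_or_eq_of_le hs₂mem.1.1 with h | h
    · exact h
    · exfalso; rw [← h] at hψs₂; linarith
  have hs₂r₀ : s₂ ≤ r₀ := hs₂mem.1.2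
  have hs₂Icc : Icc s₁ s₂ ⊆ Icc r₁ r₀ := fun t ht =>
    ⟨hr₁s₁.le.trans ht.1, ht.2.trans hs₂r₀⟩
  have hψpos : ∀ t ∈ Ico s₁ s₂, 0 < ψ t := by
    intro t ht
    have htI : t ∈ Icc r₁ r₀ := hs₂Icc ⟨ht.1, ht.2.le⟩
    have hnn : 0 ≤ ψ t := by rw [hψφ t htI]; exact hφnn t htI
    rcases lt_or_eq_of_le hnn with h | h
    · exact h
    · exfalso
      have : t ∈ Z := ⟨⟨ht.1, htI.2⟩, h.symm⟩
      exact absurd (csInf_le hZbdd this) (not_le.mpr ht.2)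
  set c : ℝ := ψ s₁ with hcdef
  -- the set of "last exit times"
  set A : Set ℝ := {t | t ∈ Ico s₁ s₂ ∧ ∀ s ∈ Ioc t s₂, ψ s < ψ t} with hA
  have hA_sub : A ⊆ Ioo r₁ r₀ := fun t ht =>
    ⟨hr₁s₁.trans_le ht.1.1, ht.1.2.trans_le hs₂r₀⟩
  have hA_meas : MeasurableSet A := by
    have hAeq : A = Ico s₁ s₂ ∩ ⋂ (q : ℚ),
        ({t : ℝ | ¬((t < (q:ℝ)) ∧ ((q:ℝ) ≤ s₂))} ∪
          {t : ℝ | sSup (ψ '' Icc (q:ℝ) s₂) < ψ t}) := by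
      ext t
      simp only [hA, mem_setOf_eq, mem_inter_iff, mem_iUnion, mem_iInter, mem_union]
      constructor
      · rintro ⟨ht, hlast⟩
        refine ⟨ht, fun q => ?_⟩
        by_cases hq : (t < (q:ℝ)) ∧ ((q:ℝ) ≤ s₂)
        · right
          obtain ⟨smax, hsmem, hmax⟩ := isCompact_Icc.exists_isMaxOn
            (nonempty_Icc.mpr hq.2) (hψc.continuousOn (s := Icc (q:ℝ) s₂))
          have hsup : sSup (ψ '' Icc (q:ℝ) s₂) = ψ smax := by
            refine IsGreatest.csSup_eq ⟨mem_image_of_mem ψ hsmem, ?_⟩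
            rintro _ ⟨u, hu, rfl⟩
            exact hmax hu
          rw [hsup]
          exact hlast smax ⟨hq.1.trans_le hsmem.1, hsmem.2⟩
        · exact Or.inl hq
      · rintro ⟨ht, hq⟩
        refine ⟨ht, fun s hs => ?_⟩
        obtain ⟨q, hq1, hq2⟩ := exists_rat_btwn hs.1
        rcases hq q with h | h
        · exact absurd ⟨hq1, hq2.le.trans hs.2⟩ h
        · refine lt_of_le_of_lt ?_ h
          refine le_csSup (isCompact_Icc.bddAbove_image (hψc.continuousOn)) ?_
          exact mem_image_of_mem ψ ⟨hq2.le, hs.2⟩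
    rw [hAeq]
    refine measurableSet_Ico.inter (MeasurableSet.iInter fun q => ?_)
    refine MeasurableSet.union ?_ ?_
    · by_cases hq : (q:ℝ) ≤ s₂
      · have : {t : ℝ | ¬((t < (q:ℝ)) ∧ ((q:ℝ) ≤ s₂))} = Ici (q:ℝ) := by
          ext t; simp [hq, not_lt]
        rw [this]; exact measurableSet_Ici
      · have : {t : ℝ | ¬((t < (q:ℝ)) ∧ ((q:ℝ) ≤ s₂))} = univ := by
          ext t; simp [hq]
        rw [this]; exact MeasurableSet.univ
    · exact measurableSet_lt measurable_const hψc.measurable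
  have hA_inj : InjOn ψ A := by
    intro x hx y hy hxy
    by_contra hne
    rcases lt_or_gt_of_ne hne with h | h
    · exact absurd hxy (ne_of_gt (hx.2 y ⟨h, hy.1.2.le⟩))
    · exact absurd hxy (ne_of_lt (hy.2 x ⟨h, hx.1.2.le⟩))
  -- exceptional null set
  have hae : ∀ᵐ t ∂volume, t ∈ Ioo r₁ r₀ →
      HasDerivAt φ (g t) t ∧ ENNReal.ofReal (-g t) ≤ f (φ t) := by
    filter_upwards [hg_deriv, hsub] with t h1 h2 ht
    exact ⟨h1 ht, h2 ht⟩
  have hbad : volume {t | ¬(t ∈ Ioo r₁ r₀ →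
      HasDerivAt φ (g t) t ∧ ENNReal.ofReal (-g t) ≤ f (φ t))} = 0 := by
    rw [← MeasureTheory.ae_iff] at *
    exact hae
  set T : Set ℝ := toMeasurable volume {t | ¬(t ∈ Ioo r₁ r₀ →
      HasDerivAt φ (g t) t ∧ ENNReal.ofReal (-g t) ≤ f (φ t))} with hT
  have hT_meas : MeasurableSet T := measurableSet_toMeasurable _ _
  have hT_null : volume T = 0 := by rw [hT, measure_toMeasurable]; exact hbad
  have hT_spec : ∀ t, t ∉ T → t ∈ Ioo r₁ r₀ →
      HasDerivAt φ (g t) t ∧ ENNReal.ofReal (-g t) ≤ f (φ t) := by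
    intro t ht
    by_contra hcon
    exact ht (subset_toMeasurable _ _ (by simpa using hcon))
  set E : Set ℝ := A \ T with hE
  have hE_meas : MeasurableSet E := hA_meas.diff hT_meas
  have hE_subA : E ⊆ A := diff_subset
  have hE_deriv : ∀ t ∈ E, HasDerivAt ψ (g t) t := by
    intro t ht
    have htI : t ∈ Ioo r₁ r₀ := hA_sub (hE_subA ht)
    have hd := (hT_spec t ht.2 htI).1
    refine hd.congr_of_eventuallyEq ?_
    filter_upwards [isOpen_Ioo.mem_nhds htI] with u hu
    exact hψφ u ⟨hu.1.le, hu.2.le⟩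
  have hE_le : ∀ t ∈ E, ENNReal.ofReal (-g t) ≤ f (ψ t) := by
    intro t ht
    have htI : t ∈ Ioo r₁ r₀ := hA_sub (hE_subA ht)
    have := (hT_spec t ht.2 htI).2
    rwa [← hψφ t ⟨htI.1.le, htI.2.le⟩] at this
  have hE_g : ∀ t ∈ E, g t ≤ 0 := by
    intro t ht
    have htA := hE_subA ht
    have hd := ((hE_deriv t ht).hasDerivWithinAt (s := Ioi t))
    rw [hasDerivWithinAt_iff_tendsto_slope' (notMem_Ioi_self)] at hd
    refine le_of_tendsto hd ?_
    have hmem : Ioc t s₂ ∈ nhdsWithin t (Ioi t) :=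
      Ioc_mem_nhdsGT_of_mem ⟨le_rfl, htA.1.2⟩
    filter_upwards [hmem] with s hs
    rw [slope_def_field]
    have h1 : ψ s < ψ t := htA.2 s hs
    have h2 : 0 < s - t := sub_pos.mpr hs.1
    apply div_nonpos_of_nonpos_of_nonneg <;> linarith
  have harea : ∫⁻ y in ψ '' E, (f y)⁻¹ =
      ∫⁻ t in E, ENNReal.ofReal |g t| * (f (ψ t))⁻¹ := by
    have := lintegral_image_eq_lintegral_abs_det_fderiv_mul volume hE_meas
      (fun x hx => ((hE_deriv x hx).hasDerivWithinAt).hasFDerivWithinAt)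
      (hA_inj.mono hE_subA) (fun y => (f y)⁻¹)
    simpa only [ContinuousLinearMap.det_toSpanSingleton] using this
  have hfin : ∫⁻ t in E, ENNReal.ofReal |g t| * (f (ψ t))⁻¹ < ∞ := by
    have hle : ∀ t ∈ E, ENNReal.ofReal |g t| * (f (ψ t))⁻¹ ≤ 1 := by
      intro t ht
      have h1 : ENNReal.ofReal |g t| ≤ f (ψ t) := by
        rw [abs_of_nonpos (hE_g t ht)]
        exact hE_le t ht
      calc ENNReal.ofReal |g t| * (f (ψ t))⁻¹ ≤ f (ψ t) * (f (ψ t))⁻¹ :=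
            mul_le_mul_left h1 _
        _ = f (ψ t) / f (ψ t) := by rw [div_eq_mul_inv]
        _ ≤ 1 := ENNReal.div_self_le_one
    calc ∫⁻ t in E, ENNReal.ofReal |g t| * (f (ψ t))⁻¹
        ≤ ∫⁻ _ in E, 1 := setLIntegral_mono' hE_meas hle
      _ = volume E := by simp
      _ ≤ volume (Ioo r₁ r₀) := measure_mono (hE_subA.trans hA_sub)
      _ < ∞ := by rw [Real.volume_Ioo]; exact ENNReal.ofReal_lt_top
  set N : Set ℝ := ψ '' (A ∩ T) with hN
  have hN_null : volume N = 0 :=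
    hψnull _ (measure_mono_null inter_subset_right hT_null)
  have hcov : Ioo 0 c \ N ⊆ ψ '' E := by
    rintro y ⟨hy, hyN⟩
    have hKne : ∃ t ∈ Icc s₁ s₂, ψ t = y := by
      have h1 : y ∈ Icc (ψ s₂) (ψ s₁) := by
        rw [hψs₂]
        exact ⟨hy.1.le, hy.2.le⟩
      obtain ⟨t, ht, hψt⟩ := intermediate_value_Icc' hs₁s₂.le hψc.continuousOn h1
      exact ⟨t, ht, hψt⟩
    set K : Set ℝ := {t ∈ Icc s₁ s₂ | ψ t = y} with hK
    have hKcl : IsClosed K := by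
      have : K = Icc s₁ s₂ ∩ ψ ⁻¹' {y} := by ext t; simp [hK, and_comm]
      rw [this]
      exact isClosed_Icc.inter (isClosed_singleton.preimage hψc)
    have hKbdd : BddAbove K := ⟨s₂, fun t ht => ht.1.2⟩
    have hKne' : K.Nonempty := by
      obtain ⟨t, ht, hψt⟩ := hKne
      exact ⟨t, ht, hψt⟩
    set τ : ℝ := sSup K with hτdef
    have hτK : τ ∈ K := hKcl.csSup_mem hKne' hKbdd
    have hψτ : ψ τ = y := hτK.2
    have hτs₂ : τ < s₂ := by
      rcases lt_or_eq_of_le hτK.1.2 with h | h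
      · exact h
      · exfalso; rw [h, hψs₂] at hψτ; exact absurd hψτ.symm (ne_of_gt hy.1)
    have hτA : τ ∈ A := by
      refine ⟨⟨hτK.1.1, hτs₂⟩, fun s hs => ?_⟩
      rw [hψτ]
      by_contra hcon
      push_neg at hcon
      rcases lt_or_eq_of_le hcon with h | h
      · have h1 : y ∈ Icc (ψ s₂) (ψ s) := by rw [hψs₂]; exact ⟨hy.1.le, h.le⟩
        obtain ⟨u, hu, hψu⟩ := intermediate_value_Icc' hs.2 hψc.continuousOn h1
        have huK : u ∈ K := ⟨⟨(hτK.1.1.trans hs.1.le).trans hu.1, hu.2⟩, hψu⟩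
        have h3 : u ≤ τ := le_csSup hKbdd huK
        have h4 : s ≤ τ := hu.1.trans h3
        exact absurd h4 (not_le.mpr hs.1)
      · have hsK : s ∈ K := ⟨⟨hτK.1.1.trans hs.1.le, hs.2⟩, h.symm⟩
        exact absurd (le_csSup hKbdd hsK) (not_le.mpr hs.1)
    have hτT : τ ∉ T := by
      intro hτT
      exact hyN ⟨τ, ⟨hτA, hτT⟩, hψτ⟩
    exact ⟨τ, ⟨hτA, hτT⟩, hψτ⟩
  have hcpos : 0 < c := hψs₁
  have hinf : (∞ : ℝ≥0∞) ≤ ∫⁻ y in ψ '' E, (f y)⁻¹ := by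
    have h1 : ∫⁻ y in Ioo 0 c \ N, (f y)⁻¹ ≤ ∫⁻ y in ψ '' E, (f y)⁻¹ :=
      lintegral_mono_set hcov
    have h2 : ∫⁻ y in Ioo 0 c \ N, (f y)⁻¹ = ∫⁻ y in Ioo 0 c, (f y)⁻¹ := by
      apply setLIntegral_congr
      exact diff_ae_eq_self.mpr (measure_mono_null inter_subset_right hN_null)
    rw [h2, hint c hcpos] at h1
    exact h1
  rw [harea] at hinf
  exact absurd (hinf.trans_lt hfin) (lt_irrefl _)
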